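/- In the free Lie algebra over the field 𝔽₃ with three elements on generators ξ₁, ξ₂, ξ₃, ξ₄, the sequence ρ₁ = [ξ₁,ξ₂] + [ξ₁,ξ₄], ρ₂ = [ξ₂,ξ₁] + [ξ₂,ξ₃] + [ξ₂,ξ₄], ρ₃ = [ξ₃,ξ₄], ρ₄ = −[ξ₄,ξ₁] − [ξ₄,ξ₃] is strongly free. -/

import Mathlib

open LieSubmodule

section StronglyFree

attribute [local instance 100] LieRing.ofAssociativeRing

variable (K : Type*) [CommRing K] (L : Type*) [LieRing L] [LieAlgebra K L]

/-- The derived ideal `[I, I]` of a Lie ideal `I`, viewed as a Lie submodule (for the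
ambient `L`-action) of `I`. -/
def derivedLieSubmodule (I : LieIdeal K L) : LieSubmodule K L I :=
  lieSpan K L {z : I | ∃ x y : I, (z : L) = ⁅(x : L), (y : L)⁆}

/-- The abelianization `I/[I,I]` of a Lie ideal `I`. -/
abbrev LieIdealAb (I : LieIdeal K L) : Type _ := I ⧸ derivedLieSubmodule K L I

theorem lie_mk_eq_zero (I : LieIdeal K L) {x : L} (hx : x ∈ I) (m : I) :
    ⁅x, (LieSubmodule.Quotient.mk (N := derivedLieSubmodule K L I) m)⁆ = 0 := by
  have : ⁅x, (LieSubmodule.Quotient.mk (N := derivedLieSubmodule K L I) m)⁆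
      = LieSubmodule.Quotient.mk (N := derivedLieSubmodule K L I) ⁅x, m⁆ := rfl
  rw [this, LieSubmodule.Quotient.mk_eq_zero']
  exact subset_lieSpan ⟨⟨x, hx⟩, m, rfl⟩

/-- The action of the quotient Lie algebra `L ⧸ I` on the abelianization `I/[I,I]`. -/
noncomputable def abelianizationAction (I : LieIdeal K L) :
    (L ⧸ I) →ₗ⁅K⁆ Module.End K (LieIdealAb K L I) :=
  { (Submodule.liftQ I.toSubmodule
      (LieModule.toEnd K L (LieIdealAb K L I)).toLinearMap (by
        intro x hx
        ext m
        induction m using Quotient.inductionOn' with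
        | h m =>
          exact lie_mk_eq_zero K L I hx m)) with
    map_lie' := by
      intro x y
      induction x using Quotient.inductionOn' with
      | h x =>
      induction y using Quotient.inductionOn' with
      | h y =>
        have hx : (Quotient.mk'' x : L ⧸ I) = LieSubmodule.Quotient.mk (N := I) x := rfl
        have hy : (Quotient.mk'' y : L ⧸ I) = LieSubmodule.Quotient.mk (N := I) y := rfl
        simp only [hx, hy, ← LieSubmodule.Quotient.mk_bracket]
        change (LieModule.toEnd K L (LieIdealAb K L I)) ⁅x, y⁆
          = ⁅(LieModule.toEnd K L (LieIdealAb K L I)) x,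
              (LieModule.toEnd K L (LieIdealAb K L I)) y⁆
        exact LieHom.map_lie _ x y }

/-- `I/[I,I]` as a module over the universal enveloping algebra of `L ⧸ I`. -/
noncomputable instance lieIdealAbModule (I : LieIdeal K L) :
    Module (UniversalEnvelopingAlgebra K (L ⧸ I)) (LieIdealAb K L I) :=
  Module.compHom (LieIdealAb K L I)
    (UniversalEnvelopingAlgebra.lift K (abelianizationAction K L I) :
      UniversalEnvelopingAlgebra K (L ⧸ I) →ₐ[K]
        Module.End K (LieIdealAb K L I)).toRingHom

/-- A family `ρ` of elements of a Lie algebra `L` over `K` is *strongly free* if,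
denoting by `𝔯` the Lie ideal generated by the `ρ i`, by `𝔤 = L ⧸ 𝔯` and by `U𝔤` the
universal enveloping algebra of `𝔤`, the `K`-module `U𝔤` is torsion free and the
abelianization `𝔯/[𝔯,𝔯]` is a free `U𝔤`-module with basis the images of the `ρ i`. -/
def IsStronglyFree {ι : Type*} (ρ : ι → L) : Prop :=
  Submodule.torsion K (UniversalEnvelopingAlgebra K (L ⧸ lieSpan K L (Set.range ρ))) = ⊥ ∧
  ∃ b : Module.Basis ι (UniversalEnvelopingAlgebra K (L ⧸ lieSpan K L (Set.range ρ)))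
      (LieIdealAb K L (lieSpan K L (Set.range ρ))),
    ∀ i, b i = LieSubmodule.Quotient.mk
      (⟨ρ i, subset_lieSpan (Set.mem_range_self i)⟩ : lieSpan K L (Set.range ρ))

end StronglyFree

attribute [local instance 100] LieRing.ofAssociativeRing

noncomputable section Aux
open FreeLieAlgebra

namespace SFAux

abbrev F3 := ZMod 3
abbrev L4 := FreeLieAlgebra F3 (Fin 4)

variable (ρ : Fin 4 → L4)

abbrev rI : LieIdeal F3 L4 := lieSpan F3 L4 (Set.range ρ)
abbrev gQ := L4 ⧸ rI ρ
abbrev UG := UniversalEnvelopingAlgebra F3 (gQ ρ)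

/-- The quotient map `L4 → L4 ⧸ 𝔯` as a Lie algebra homomorphism. -/
def qm : L4 →ₗ⁅F3⁆ gQ ρ :=
  { (LieSubmodule.Quotient.mk' (rI ρ)).toLinearMap with
    map_lie' := rfl }

/-- The composite `L4 → 𝔤 → U𝔤` as a Lie algebra homomorphism. -/
def ex : L4 →ₗ⁅F3⁆ UG ρ := (UniversalEnvelopingAlgebra.ι F3).comp (qm ρ)

lemma qm_apply (x : L4) : qm ρ x = LieSubmodule.Quotient.mk (N := rI ρ) x := rfl

def xU (j : Fin 4) : UG ρ := ex ρ (of F3 j)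

lemma ex_mem_eq_zero {x : L4} (hx : x ∈ rI ρ) : ex ρ x = 0 := by
  have h1 : qm ρ x = 0 := (LieSubmodule.Quotient.mk_eq_zero' (N := rI ρ)).mpr hx
  simp only [ex, LieHom.comp_apply, h1, map_zero]

/-- The action of `L4` on `Fin 4 → U𝔤` through `𝔤`. -/
def act (x : L4) (m : Fin 4 → UG ρ) : Fin 4 → UG ρ := fun i => ex ρ x * m i

lemma act_add_left (x y : L4) (m : Fin 4 → UG ρ) :
    act ρ (x + y) m = act ρ x m + act ρ y m := by
  funext i; simp [act, add_mul]

lemma act_add_right (x : L4) (m n : Fin 4 → UG ρ) :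
    act ρ x (m + n) = act ρ x m + act ρ x n := by
  funext i; simp [act, mul_add]

lemma act_sub_right (x : L4) (m n : Fin 4 → UG ρ) :
    act ρ x (m - n) = act ρ x m - act ρ x n := by
  funext i; simp [act, mul_sub]

lemma act_smul_left (t : F3) (x : L4) (m : Fin 4 → UG ρ) :
    act ρ (t • x) m = t • act ρ x m := by
  funext i
  show ex ρ (t • x) * m i = t • (ex ρ x * m i)
  rw [map_smul, smul_mul_assoc]

lemma act_smul_right (t : F3) (x : L4) (m : Fin 4 → UG ρ) :
    act ρ x (t • m) = t • act ρ x m := by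
  funext i; simp [act, mul_smul_comm]

lemma act_lie (x y : L4) (m : Fin 4 → UG ρ) :
    act ρ ⁅x, y⁆ m = act ρ x (act ρ y m) - act ρ y (act ρ x m) := by
  funext i
  have h : ex ρ ⁅x, y⁆ = ex ρ x * ex ρ y - ex ρ y * ex ρ x := by
    rw [LieHom.map_lie, Ring.lie_def]
  simp [act, h, sub_mul, mul_assoc]

lemma act_mem (hx : x ∈ rI ρ) (m : Fin 4 → UG ρ) : act ρ x m = 0 := by
  funext i; simp [act, ex_mem_eq_zero ρ hx]

end SFAux
end Aux

noncomputable section Aux2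
namespace SFAux
variable (ρ : Fin 4 → L4)

/-- Semidirect product `(Fin 4 → U𝔤) ⋊ L4`. -/
def SD := (Fin 4 → UG ρ) × L4

instance : AddCommGroup (SD ρ) := inferInstanceAs (AddCommGroup ((Fin 4 → UG ρ) × L4))
instance : Module F3 (SD ρ) := inferInstanceAs (Module F3 ((Fin 4 → UG ρ) × L4))

instance : LieRing (SD ρ) :=
  { (inferInstance : AddCommGroup (SD ρ)) with
    bracket := fun a b => (act ρ a.2 b.1 - act ρ b.2 a.1, ⁅a.2, b.2⁆)
    add_lie := by
      rintro ⟨m, x⟩ ⟨n, y⟩ ⟨p, z⟩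
      show (act ρ (x + y) p - act ρ z (m + n), ⁅x + y, z⁆)
        = (act ρ x p - act ρ z m, ⁅x, z⁆) + (act ρ y p - act ρ z n, ⁅y, z⁆)
      rw [Prod.mk_add_mk]
      refine Prod.ext ?_ (by rw [add_lie])
      rw [act_add_left, act_add_right]
      abel
    lie_add := by
      rintro ⟨m, x⟩ ⟨n, y⟩ ⟨p, z⟩
      show (act ρ x (n + p) - act ρ (y + z) m, ⁅x, y + z⁆)
        = (act ρ x n - act ρ y m, ⁅x, y⁆) + (act ρ x p - act ρ z m, ⁅x, z⁆)
      rw [Prod.mk_add_mk]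
      refine Prod.ext ?_ (by rw [lie_add])
      rw [act_add_left, act_add_right]
      abel
    lie_self := by
      rintro ⟨m, x⟩
      show (act ρ x m - act ρ x m, ⁅x, x⁆) = (0, 0)
      rw [sub_self, lie_self]
    leibniz_lie := by
      rintro ⟨m, x⟩ ⟨n, y⟩ ⟨p, z⟩
      show (act ρ x (act ρ y p - act ρ z n) - act ρ ⁅y, z⁆ m, ⁅x, ⁅y, z⁆⁆)
        = (act ρ ⁅x, y⁆ p - act ρ z (act ρ x n - act ρ y m), ⁅⁅x, y⁆, z⁆)
          + (act ρ y (act ρ x p - act ρ z m) - act ρ ⁅x, z⁆ n, ⁅y, ⁅x, z⁆⁆)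
      rw [Prod.mk_add_mk]
      refine Prod.ext ?_ (by rw [leibniz_lie])
      rw [act_lie, act_lie, act_lie, act_sub_right, act_sub_right, act_sub_right]
      abel }

instance : LieAlgebra F3 (SD ρ) where
  lie_smul := by
    rintro t ⟨m, x⟩ ⟨n, y⟩
    show (act ρ x (t • n) - act ρ (t • y) m, ⁅x, t • y⁆)
      = t • (act ρ x n - act ρ y m, ⁅x, y⁆)
    rw [Prod.smul_mk]
    refine Prod.ext ?_ (by show ⁅x, t • y⁆ = t • ⁅x, y⁆; exact lie_smul t x y)
    rw [act_smul_right, act_smul_left, smul_sub]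

lemma sd_bracket (a b : SD ρ) :
    ⁅a, b⁆ = (act ρ a.2 b.1 - act ρ b.2 a.1, ⁅a.2, b.2⁆) := rfl

/-- The second projection as a Lie algebra homomorphism. -/
def sndHom : SD ρ →ₗ⁅F3⁆ L4 where
  toFun a := a.2
  map_add' _ _ := rfl
  map_smul' _ _ := rfl
  map_lie' := rfl

/-- The universal map into the semidirect product. -/
def lft : L4 →ₗ⁅F3⁆ SD ρ :=
  FreeLieAlgebra.lift F3 (fun j => ((Pi.single j (1 : UG ρ) : Fin 4 → UG ρ), FreeLieAlgebra.of F3 j))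

lemma lft_snd (z : L4) : (lft ρ z).2 = z := by
  have h : (sndHom ρ).comp (lft ρ) = LieHom.id := by
    apply FreeLieAlgebra.hom_ext
    intro j
    show (lft ρ (FreeLieAlgebra.of F3 j)).2 = FreeLieAlgebra.of F3 j
    exact congrArg Prod.snd (FreeLieAlgebra.lift_of_apply (L := SD ρ) _ j)
  exact LieHom.congr_fun h z

/-- The Fox-derivative-style map `L4 → (Fin 4 → U𝔤)`. -/
def Dmap : L4 →ₗ[F3] (Fin 4 → UG ρ) :=
  (LinearMap.fst F3 (Fin 4 → UG ρ) L4).comp (lft ρ).toLinearMap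

lemma Dmap_apply (z : L4) : Dmap ρ z = (lft ρ z).1 := rfl

lemma Dmap_of (j : Fin 4) : Dmap ρ (FreeLieAlgebra.of F3 j) = Pi.single j (1 : UG ρ) := by
  show (lft ρ (FreeLieAlgebra.of F3 j)).1 = _
  exact congrArg Prod.fst (FreeLieAlgebra.lift_of_apply (L := SD ρ) _ j)

lemma Dmap_lie (x y : L4) :
    Dmap ρ ⁅x, y⁆ = act ρ x (Dmap ρ y) - act ρ y (Dmap ρ x) := by
  have h := (lft ρ).map_lie x y
  have h1 : (lft ρ ⁅x, y⁆).1 = (⁅lft ρ x, lft ρ y⁆ : SD ρ).1 := by rw [h]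
  rw [sd_bracket, lft_snd, lft_snd] at h1
  exact h1

end SFAux
end Aux2

noncomputable section Aux3
namespace SFAux
variable (ρ : Fin 4 → L4)

abbrev Mab := LieIdealAb F3 L4 (rI ρ)

def mkd : rI ρ → Mab ρ := LieSubmodule.Quotient.mk (N := derivedLieSubmodule F3 L4 (rI ρ))

def gel (i : Fin 4) : Mab ρ :=
  LieSubmodule.Quotient.mk (⟨ρ i, subset_lieSpan (Set.mem_range_self i)⟩ : rI ρ)

lemma iota_smul (y : L4) (m : rI ρ) :
    (UniversalEnvelopingAlgebra.ι F3 (qm ρ y) : UG ρ) • mkd ρ m = mkd ρ ⁅y, m⁆ := by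
  show (UniversalEnvelopingAlgebra.lift F3 (abelianizationAction F3 L4 (rI ρ)))
      (UniversalEnvelopingAlgebra.ι F3 (qm ρ y)) (mkd ρ m) = mkd ρ ⁅y, m⁆
  rw [UniversalEnvelopingAlgebra.lift_ι_apply]
  show (Submodule.liftQ (rI ρ).toSubmodule
      (LieModule.toEnd F3 L4 (LieIdealAb F3 L4 (rI ρ))).toLinearMap _)
      (Submodule.Quotient.mk y) (mkd ρ m) = mkd ρ ⁅y, m⁆
  change (LieModule.toEnd F3 L4 (LieIdealAb F3 L4 (rI ρ)) y) (mkd ρ m) = mkd ρ ⁅y, m⁆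
  rfl

lemma mkd_add (a b : rI ρ) : mkd ρ (a + b) = mkd ρ a + mkd ρ b := rfl

lemma mkd_smul (t : F3) (a : rI ρ) : mkd ρ (t • a) = t • mkd ρ a := rfl

/-- The pullback of the span of the `gel i` to `L4`. -/
def Psub : Submodule F3 L4 where
  carrier := {x | ∃ h : x ∈ rI ρ,
    mkd ρ ⟨x, h⟩ ∈ Submodule.span (UG ρ) (Set.range (gel ρ))}
  zero_mem' := ⟨(rI ρ).zero_mem, by
    have h0 : mkd ρ ⟨(0 : L4), (rI ρ).zero_mem⟩ = 0 :=
      (LieSubmodule.Quotient.mk_eq_zero' (N := derivedLieSubmodule F3 L4 (rI ρ))).mpr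
        (derivedLieSubmodule F3 L4 (rI ρ)).zero_mem
    rw [h0]; exact Submodule.zero_mem _⟩
  add_mem' := by
    rintro x y ⟨hx, hx2⟩ ⟨hy, hy2⟩
    refine ⟨(rI ρ).add_mem hx hy, ?_⟩
    have : mkd ρ ⟨x + y, (rI ρ).add_mem hx hy⟩ = mkd ρ ⟨x, hx⟩ + mkd ρ ⟨y, hy⟩ := rfl
    rw [this]
    exact Submodule.add_mem _ hx2 hy2
  smul_mem' := by
    rintro t x ⟨hx, hx2⟩
    refine ⟨(rI ρ).smul_mem t hx, ?_⟩
    have : mkd ρ ⟨t • x, (rI ρ).smul_mem t hx⟩ = t • mkd ρ ⟨x, hx⟩ := rfl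
    rw [this]
    have halg : t • mkd ρ ⟨x, hx⟩ = (algebraMap F3 (UG ρ) t) • mkd ρ ⟨x, hx⟩ := by
      show t • mkd ρ ⟨x, hx⟩ =
        (UniversalEnvelopingAlgebra.lift F3 (abelianizationAction F3 L4 (rI ρ)))
          (algebraMap F3 (UG ρ) t) (mkd ρ ⟨x, hx⟩)
      rw [AlgHom.commutes]
      rfl
    rw [halg]
    exact Submodule.smul_mem _ _ hx2

def Pideal : LieIdeal F3 L4 :=
  { Psub ρ with
    lie_mem := by
      rintro y x ⟨hx, hx2⟩
      refine ⟨(rI ρ).lie_mem hx, ?_⟩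
      have h1 : mkd ρ ⟨⁅y, x⁆, (rI ρ).lie_mem hx⟩ = mkd ρ ⁅y, (⟨x, hx⟩ : rI ρ)⁆ := rfl
      rw [h1, ← iota_smul]
      exact Submodule.smul_mem _ _ hx2 }

lemma span_gel_top : ⊤ ≤ Submodule.span (UG ρ) (Set.range (gel ρ)) := by
  have hle : rI ρ ≤ Pideal ρ := by
    apply (lieSpan_le (R := F3) (L := L4)).mpr
    rintro _ ⟨i, rfl⟩
    exact ⟨subset_lieSpan (Set.mem_range_self i),
      Submodule.subset_span ⟨i, rfl⟩⟩
  intro v _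
  obtain ⟨m, rfl⟩ := LieSubmodule.Quotient.surjective_mk'
    (N := derivedLieSubmodule F3 L4 (rI ρ)) v
  obtain ⟨h, hmem⟩ := hle m.2
  have : mkd ρ ⟨m.1, h⟩ = LieSubmodule.Quotient.mk' (derivedLieSubmodule F3 L4 (rI ρ)) m := rfl
  rw [← this]
  exact hmem

def Dr : rI ρ →ₗ[F3] (Fin 4 → UG ρ) := (Dmap ρ).comp (rI ρ).toSubmodule.subtype

lemma act_zero (x : L4) : act ρ x (0 : Fin 4 → UG ρ) = 0 := by
  funext i; simp [act]

lemma Dr_apply (m : rI ρ) : Dr ρ m = Dmap ρ m.1 := rfl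

def derKer : LieSubmodule F3 L4 (rI ρ) :=
  { LinearMap.ker (Dr ρ) with
    lie_mem := by
      intro y m hm
      have hm' : Dmap ρ m.1 = 0 := hm
      show ⁅y, m⁆ ∈ LinearMap.ker (Dr ρ)
      rw [LinearMap.mem_ker]
      have h1 : Dr ρ ⁅y, m⁆ = Dmap ρ ⁅y, m.1⁆ := rfl
      rw [h1, Dmap_lie, hm', act_zero, act_mem ρ m.2, zero_sub, neg_zero] }

lemma der_le_ker : derivedLieSubmodule F3 L4 (rI ρ) ≤ derKer ρ := by
  apply (lieSpan_le (R := F3) (L := L4)).mpr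
  rintro z ⟨x, y, hz⟩
  show z ∈ LinearMap.ker (Dr ρ)
  rw [LinearMap.mem_ker]
  have h1 : Dr ρ z = Dmap ρ (z : L4) := rfl
  rw [h1, hz, Dmap_lie, act_mem ρ x.2, act_mem ρ y.2, sub_self]

def ψ0 : Mab ρ →ₗ[F3] (Fin 4 → UG ρ) :=
  Submodule.liftQ (derivedLieSubmodule F3 L4 (rI ρ)).toSubmodule (Dr ρ)
    (fun m hm => der_le_ker ρ hm)

lemma ψ0_mk (m : rI ρ) : ψ0 ρ (mkd ρ m) = Dmap ρ m.1 := rfl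

lemma ψ0_iota_smul (y : L4) (v : Mab ρ) :
    ψ0 ρ ((UniversalEnvelopingAlgebra.ι F3 (qm ρ y) : UG ρ) • v)
      = (UniversalEnvelopingAlgebra.ι F3 (qm ρ y) : UG ρ) • ψ0 ρ v := by
  obtain ⟨m, rfl⟩ := LieSubmodule.Quotient.surjective_mk'
    (N := derivedLieSubmodule F3 L4 (rI ρ)) v
  have hv : LieSubmodule.Quotient.mk' (derivedLieSubmodule F3 L4 (rI ρ)) m = mkd ρ m := rfl
  rw [hv, iota_smul, ψ0_mk]
  have h1 : (⁅y, m⁆ : rI ρ).1 = ⁅y, m.1⁆ := rfl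
  rw [ψ0_mk, h1, Dmap_lie, act_mem ρ m.2, sub_zero]
  rfl

end SFAux
end Aux3

set_option synthInstance.maxHeartbeats 1000000
set_option maxHeartbeats 1000000
noncomputable section Aux4
namespace SFAux
variable (ρ : Fin 4 → L4)

abbrev adj : Subalgebra F3 (UG ρ) :=
  Algebra.adjoin F3 (Set.range (⇑(UniversalEnvelopingAlgebra.ι F3 : gQ ρ →ₗ⁅F3⁆ UG ρ)))

/-- `ι` corestricted to the subalgebra generated by its range. -/
def ιres : gQ ρ →ₗ⁅F3⁆ adj ρ where
  toFun z := ⟨UniversalEnvelopingAlgebra.ι F3 z, Algebra.subset_adjoin ⟨z, rfl⟩⟩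
  map_add' x y := Subtype.ext (by simp)
  map_smul' t x := Subtype.ext (by simp)
  map_lie' := by
    intro x y
    apply Subtype.ext
    show (UniversalEnvelopingAlgebra.ι F3) ⁅x, y⁆ = _
    rw [LieHom.map_lie]
    rfl

def retr : UG ρ →ₐ[F3] adj ρ := UniversalEnvelopingAlgebra.lift F3 (ιres ρ)

lemma val_retr (c : UG ρ) : ((retr ρ c : adj ρ) : UG ρ) = c := by
  have h : (adj ρ).val.comp (retr ρ) = AlgHom.id F3 (UG ρ) := by
    apply UniversalEnvelopingAlgebra.hom_ext
    apply LieHom.ext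
    intro z
    show (adj ρ).val (retr ρ (UniversalEnvelopingAlgebra.ι F3 z))
      = UniversalEnvelopingAlgebra.ι F3 z
    rw [retr, UniversalEnvelopingAlgebra.lift_ι_apply]
    rfl
  exact AlgHom.congr_fun h c

lemma mem_adjoin (c : UG ρ) : c ∈ adj ρ := by
  rw [← val_retr ρ c]; exact (retr ρ c).2

lemma ψ0_smul (c : UG ρ) (v : Mab ρ) : ψ0 ρ (c • v) = c • ψ0 ρ v := by
  let S : Subalgebra F3 (UG ρ) :=
    { carrier := {c | ∀ v : Mab ρ, ψ0 ρ (c • v) = c • ψ0 ρ v}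
      one_mem' := by intro v; rw [one_smul, one_smul]
      mul_mem' := by
        intro a b ha hb v
        rw [mul_smul, ha, hb, mul_smul]
      add_mem' := by
        intro a b ha hb v
        rw [add_smul, add_smul, map_add, ha, hb]
      algebraMap_mem' := by
        intro t v
        have h1 : (algebraMap F3 (UG ρ) t) • v = t • v := by
          show (UniversalEnvelopingAlgebra.lift F3 (abelianizationAction F3 L4 (rI ρ)))
            (algebraMap F3 (UG ρ) t) v = t • v
          rw [AlgHom.commutes]
          rfl
        have h2 : (algebraMap F3 (UG ρ) t) • ψ0 ρ v = t • ψ0 ρ v := by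
          rw [algebraMap_smul]
        rw [h1, h2, map_smul] }
  have hS : adj ρ ≤ S := by
    apply Algebra.adjoin_le
    rintro _ ⟨z, rfl⟩
    obtain ⟨y, rfl⟩ := LieSubmodule.Quotient.surjective_mk' (N := rI ρ) z
    intro v
    exact ψ0_iota_smul ρ y v
  exact hS (mem_adjoin ρ c) v

/-- The induced `U𝔤`-linear map `𝔯/[𝔯,𝔯] → (U𝔤)⁴`. -/
def ψ : Mab ρ →ₗ[UG ρ] (Fin 4 → UG ρ) where
  toFun := ψ0 ρ
  map_add' := (ψ0 ρ).map_add
  map_smul' := ψ0_smul ρ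

lemma ψ_mk (m : rI ρ) : ψ ρ (mkd ρ m) = Dmap ρ m.1 := rfl

end SFAux
end Aux4

noncomputable section Aux5
namespace SFAux
open FreeLieAlgebra
variable (ρ : Fin 4 → L4)

abbrev CM := MonoidAlgebra F3 (FreeMonoid (Fin 2) × FreeMonoid (Fin 2))

def cu (i : Fin 2) : CM := MonoidAlgebra.single (FreeMonoid.of i, 1) 1
def cw (i : Fin 2) : CM := MonoidAlgebra.single (1, FreeMonoid.of i) 1

lemma cu_mul_cw (i j : Fin 2) : cu i * cw j = cw j * cu i := by
  simp [cu, cw, MonoidAlgebra.single_mul_single]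

lemma lie_cu_cw (i j : Fin 2) : (⁅cu i, cw j⁆ : CM) = 0 := by
  rw [Ring.lie_def, cu_mul_cw, sub_self]

lemma lie_cw_cu (i j : Fin 2) : (⁅cw j, cu i⁆ : CM) = 0 := by
  rw [Ring.lie_def, cu_mul_cw, sub_self]

def tv : Fin 4 → CM := ![cw 1, cu 1, cw 0 - cu 0, cu 0]

def ℓθ : L4 →ₗ⁅F3⁆ CM := FreeLieAlgebra.lift F3 tv

lemma ℓθ_of (j : Fin 4) : ℓθ (of F3 j) = tv j := FreeLieAlgebra.lift_of_apply tv j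

section hyps
variable
    (h1 : ρ 0 = ⁅of F3 (0 : Fin 4), of F3 (1 : Fin 4)⁆ + ⁅of F3 (0 : Fin 4), of F3 (3 : Fin 4)⁆)
    (h2 : ρ 1 = ⁅of F3 (1 : Fin 4), of F3 (0 : Fin 4)⁆ + ⁅of F3 (1 : Fin 4), of F3 (2 : Fin 4)⁆
        + ⁅of F3 (1 : Fin 4), of F3 (3 : Fin 4)⁆)
    (h3 : ρ 2 = ⁅of F3 (2 : Fin 4), of F3 (3 : Fin 4)⁆)
    (h4 : ρ 3 = -⁅of F3 (3 : Fin 4), of F3 (0 : Fin 4)⁆ - ⁅of F3 (3 : Fin 4), of F3 (2 : Fin 4)⁆)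

include h1 h2 h3 h4

lemma ℓθ_rho (i : Fin 4) : ℓθ (ρ i) = 0 := by
  fin_cases i
  · show ℓθ (ρ 0) = 0
    rw [h1, map_add, LieHom.map_lie, LieHom.map_lie, ℓθ_of, ℓθ_of, ℓθ_of]
    show (⁅cw 1, cu 1⁆ : CM) + ⁅cw 1, cu 0⁆ = 0
    rw [lie_cw_cu, lie_cw_cu, add_zero]
  · show ℓθ (ρ 1) = 0
    rw [h2, map_add, map_add, LieHom.map_lie, LieHom.map_lie, LieHom.map_lie,
      ℓθ_of, ℓθ_of, ℓθ_of, ℓθ_of]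
    show (⁅cu 1, cw 1⁆ : CM) + ⁅cu 1, cw 0 - cu 0⁆ + ⁅cu 1, cu 0⁆ = 0
    rw [lie_sub, lie_cu_cw, lie_cu_cw]
    abel
  · show ℓθ (ρ 2) = 0
    rw [h3, LieHom.map_lie, ℓθ_of, ℓθ_of]
    show (⁅cw 0 - cu 0, cu 0⁆ : CM) = 0
    rw [sub_lie, lie_cw_cu, lie_self, zero_sub, neg_zero]
  · show ℓθ (ρ 3) = 0
    rw [h4, map_sub, map_neg, LieHom.map_lie, LieHom.map_lie, ℓθ_of, ℓθ_of, ℓθ_of]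
    show -(⁅cu 0, cw 1⁆ : CM) - ⁅cu 0, cw 0 - cu 0⁆ = 0
    rw [lie_sub, lie_cu_cw, lie_cu_cw, lie_self]
    abel

lemma rI_le_ker : ∀ x ∈ rI ρ, ℓθ x = 0 := by
  have h : rI ρ ≤ ℓθ.ker := by
    apply (lieSpan_le (R := F3) (L := L4)).mpr
    rintro _ ⟨i, rfl⟩
    exact LieHom.mem_ker.mpr (ℓθ_rho ρ h1 h2 h3 h4 i)
  exact fun x hx => LieHom.mem_ker.mp (h hx)

/-- `ℓθ` descends to the quotient Lie algebra. -/
def θg : gQ ρ →ₗ⁅F3⁆ CM :=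
  { Submodule.liftQ (rI ρ).toSubmodule ℓθ.toLinearMap
      (fun x hx => rI_le_ker ρ h1 h2 h3 h4 x hx) with
    map_lie' := by
      intro x y
      induction x using Quotient.inductionOn' with
      | h x =>
      induction y using Quotient.inductionOn' with
      | h y =>
        have hx : (Quotient.mk'' x : gQ ρ) = LieSubmodule.Quotient.mk (N := rI ρ) x := rfl
        have hy : (Quotient.mk'' y : gQ ρ) = LieSubmodule.Quotient.mk (N := rI ρ) y := rfl
        simp only [hx, hy, ← LieSubmodule.Quotient.mk_bracket]
        show Submodule.liftQ (rI ρ).toSubmodule ℓθ.toLinearMap _ (Submodule.Quotient.mk ⁅x, y⁆)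
          = ⁅Submodule.liftQ (rI ρ).toSubmodule ℓθ.toLinearMap _ (Submodule.Quotient.mk x),
              Submodule.liftQ (rI ρ).toSubmodule ℓθ.toLinearMap _ (Submodule.Quotient.mk y)⁆
        change ℓθ ⁅x, y⁆ = ⁅ℓθ x, ℓθ y⁆
        exact ℓθ.map_lie x y }

lemma θg_qm (x : L4) : θg ρ h1 h2 h3 h4 (qm ρ x) = ℓθ x := rfl

def θA : UG ρ →ₐ[F3] CM := UniversalEnvelopingAlgebra.lift F3 (θg ρ h1 h2 h3 h4)

lemma θA_xU (j : Fin 4) : θA ρ h1 h2 h3 h4 (xU ρ j) = tv j := by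
  show θA ρ h1 h2 h3 h4 (UniversalEnvelopingAlgebra.ι F3 (qm ρ (of F3 j))) = tv j
  rw [θA, UniversalEnvelopingAlgebra.lift_ι_apply]
  rw [θg_qm, ℓθ_of]

end hyps

/- The reverse algebra map `η : CM → U𝔤`. -/

def uv : Fin 2 → UG ρ := ![ex ρ (of F3 3), ex ρ (of F3 1)]
def wv : Fin 2 → UG ρ := ![ex ρ (of F3 2 + of F3 3), ex ρ (of F3 0)]

lemma ex_commute {x y : L4} (h : ⁅x, y⁆ ∈ rI ρ) : Commute (ex ρ x) (ex ρ y) := by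
  have h0 : ex ρ ⁅x, y⁆ = 0 := ex_mem_eq_zero ρ h
  rw [LieHom.map_lie, Ring.lie_def] at h0
  exact (sub_eq_zero.mp h0)

section hyps2
variable
    (h1 : ρ 0 = ⁅of F3 (0 : Fin 4), of F3 (1 : Fin 4)⁆ + ⁅of F3 (0 : Fin 4), of F3 (3 : Fin 4)⁆)
    (h2 : ρ 1 = ⁅of F3 (1 : Fin 4), of F3 (0 : Fin 4)⁆ + ⁅of F3 (1 : Fin 4), of F3 (2 : Fin 4)⁆
        + ⁅of F3 (1 : Fin 4), of F3 (3 : Fin 4)⁆)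
    (h3 : ρ 2 = ⁅of F3 (2 : Fin 4), of F3 (3 : Fin 4)⁆)
    (h4 : ρ 3 = -⁅of F3 (3 : Fin 4), of F3 (0 : Fin 4)⁆ - ⁅of F3 (3 : Fin 4), of F3 (2 : Fin 4)⁆)

lemma hρmem (i : Fin 4) : ρ i ∈ rI ρ := subset_lieSpan ⟨i, rfl⟩

include h3 in
lemma hm32 : ⁅of F3 (3 : Fin 4), of F3 (2 : Fin 4)⁆ ∈ rI ρ := by
  have e : ⁅of F3 (3 : Fin 4), of F3 (2 : Fin 4)⁆ = -ρ 2 := by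
    rw [h3, ← lie_skew]
  rw [e]; exact neg_mem (hρmem ρ 2)

include h3 h4 in
lemma hm30 : ⁅of F3 (3 : Fin 4), of F3 (0 : Fin 4)⁆ ∈ rI ρ := by
  have e : ⁅of F3 (3 : Fin 4), of F3 (0 : Fin 4)⁆
      = -ρ 3 - ⁅of F3 (3 : Fin 4), of F3 (2 : Fin 4)⁆ := by
    rw [h4]; abel
  rw [e]; exact sub_mem (neg_mem (hρmem ρ 3)) (hm32 ρ h3)

include h1 h3 h4 in
lemma hm10 : ⁅of F3 (1 : Fin 4), of F3 (0 : Fin 4)⁆ ∈ rI ρ := by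
  have e : ⁅of F3 (1 : Fin 4), of F3 (0 : Fin 4)⁆
      = -ρ 0 - ⁅of F3 (3 : Fin 4), of F3 (0 : Fin 4)⁆ := by
    rw [h1, ← lie_skew (of F3 (1 : Fin 4)) (of F3 (0 : Fin 4)),
      ← lie_skew (of F3 (3 : Fin 4)) (of F3 (0 : Fin 4))]
    abel
  rw [e]; exact sub_mem (neg_mem (hρmem ρ 0)) (hm30 ρ h3 h4)

include h1 h2 h3 h4 in
lemma hm1w : ⁅of F3 (1 : Fin 4), of F3 (2 : Fin 4) + of F3 (3 : Fin 4)⁆ ∈ rI ρ := by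
  have e : ⁅of F3 (1 : Fin 4), of F3 (2 : Fin 4) + of F3 (3 : Fin 4)⁆
      = ρ 1 - ⁅of F3 (1 : Fin 4), of F3 (0 : Fin 4)⁆ := by
    rw [lie_add, h2]; abel
  rw [e]; exact sub_mem (hρmem ρ 1) (hm10 ρ h1 h3 h4)

include h3 in
lemma hm3w : ⁅of F3 (3 : Fin 4), of F3 (2 : Fin 4) + of F3 (3 : Fin 4)⁆ ∈ rI ρ := by
  have e : ⁅of F3 (3 : Fin 4), of F3 (2 : Fin 4) + of F3 (3 : Fin 4)⁆
      = ⁅of F3 (3 : Fin 4), of F3 (2 : Fin 4)⁆ := by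
    rw [lie_add, lie_self, add_zero]
  rw [e]; exact hm32 ρ h3

include h1 h2 h3 h4 in
lemma uv_wv_commute (i j : Fin 2) : Commute (uv ρ i) (wv ρ j) := by
  fin_cases i <;> fin_cases j
  · exact ex_commute ρ (hm3w ρ h3)
  · exact ex_commute ρ (hm30 ρ h3 h4)
  · exact ex_commute ρ (hm1w ρ h1 h2 h3 h4)
  · exact ex_commute ρ (hm10 ρ h1 h3 h4)

include h1 h2 h3 h4 in
lemma lift_commute (m n : FreeMonoid (Fin 2)) :
    Commute (FreeMonoid.lift (uv ρ) m) (FreeMonoid.lift (wv ρ) n) := by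
  have key : ∀ (i : Fin 2) (n : FreeMonoid (Fin 2)),
      Commute (uv ρ i) (FreeMonoid.lift (wv ρ) n) := by
    intro i n
    induction n using FreeMonoid.inductionOn' with
    | one => rw [map_one]; exact Commute.one_right _
    | of_mul b a ih =>
      rw [map_mul, FreeMonoid.lift_eval_of]
      exact Commute.mul_right (uv_wv_commute ρ h1 h2 h3 h4 i b) ih
  induction m using FreeMonoid.inductionOn' with
  | one => rw [map_one]; exact Commute.one_left _
  | of_mul b a ih =>
    rw [map_mul, FreeMonoid.lift_eval_of]
    exact Commute.mul_left (key b n) ih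

/-- The coproduct monoid homomorphism. -/
def ηm : FreeMonoid (Fin 2) × FreeMonoid (Fin 2) →* UG ρ :=
  MonoidHom.noncommCoprod (FreeMonoid.lift (uv ρ)) (FreeMonoid.lift (wv ρ))
    (lift_commute ρ h1 h2 h3 h4)

def ηA : CM →ₐ[F3] UG ρ :=
  MonoidAlgebra.lift F3 (UG ρ) (FreeMonoid (Fin 2) × FreeMonoid (Fin 2))
    (ηm ρ h1 h2 h3 h4)

lemma ηA_cu (i : Fin 2) : ηA ρ h1 h2 h3 h4 (cu i) = uv ρ i := by
  rw [cu, ηA, MonoidAlgebra.lift_single]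
  show (1 : F3) • (ηm ρ h1 h2 h3 h4 (FreeMonoid.of i, 1)) = uv ρ i
  rw [one_smul]
  show (FreeMonoid.lift (uv ρ)) (FreeMonoid.of i) * (FreeMonoid.lift (wv ρ)) 1 = uv ρ i
  rw [map_one, mul_one, FreeMonoid.lift_eval_of]

lemma ηA_cw (j : Fin 2) : ηA ρ h1 h2 h3 h4 (cw j) = wv ρ j := by
  rw [cw, ηA, MonoidAlgebra.lift_single]
  show (1 : F3) • (ηm ρ h1 h2 h3 h4 (1, FreeMonoid.of j)) = wv ρ j
  rw [one_smul]
  show (FreeMonoid.lift (uv ρ)) 1 * (FreeMonoid.lift (wv ρ)) (FreeMonoid.of j) = wv ρ j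
  rw [map_one, one_mul, FreeMonoid.lift_eval_of]

lemma ηℓ (y : L4) : ηA ρ h1 h2 h3 h4 (ℓθ y) = ex ρ y := by
  have h : (AlgHom.toLieHom (ηA ρ h1 h2 h3 h4)).comp ℓθ = ex ρ := by
    apply FreeLieAlgebra.hom_ext
    intro j
    show ηA ρ h1 h2 h3 h4 (ℓθ (of F3 j)) = ex ρ (of F3 j)
    rw [ℓθ_of]
    fin_cases j
    · show ηA ρ h1 h2 h3 h4 (cw 1) = _
      rw [ηA_cw]; rfl
    · show ηA ρ h1 h2 h3 h4 (cu 1) = _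
      rw [ηA_cu]; rfl
    · show ηA ρ h1 h2 h3 h4 (cw 0 - cu 0) = _
      rw [map_sub, ηA_cw, ηA_cu]
      show ex ρ (of F3 2 + of F3 3) - ex ρ (of F3 3) = ex ρ (of F3 2)
      rw [map_add]; abel
    · show ηA ρ h1 h2 h3 h4 (cu 0) = _
      rw [ηA_cu]; rfl
  exact LieHom.congr_fun h y

lemma ηθ_id (c : UG ρ) : ηA ρ h1 h2 h3 h4 (θA ρ h1 h2 h3 h4 c) = c := by
  have h : (ηA ρ h1 h2 h3 h4).comp (θA ρ h1 h2 h3 h4) = AlgHom.id F3 (UG ρ) := by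
    apply UniversalEnvelopingAlgebra.hom_ext
    apply LieHom.ext
    intro z
    obtain ⟨y, rfl⟩ := LieSubmodule.Quotient.surjective_mk' (N := rI ρ) z
    show ηA ρ h1 h2 h3 h4 (θA ρ h1 h2 h3 h4 (UniversalEnvelopingAlgebra.ι F3 (qm ρ y)))
      = UniversalEnvelopingAlgebra.ι F3 (qm ρ y)
    rw [θA, UniversalEnvelopingAlgebra.lift_ι_apply, θg_qm, ηℓ]
    rfl
  exact AlgHom.congr_fun h c

end hyps2

/-- The key independence computation in the monoid algebra. -/
lemma cm_indep (p q : CM) (h : p * cu 0 + q * cu 1 = 0) : p = 0 ∧ q = 0 := by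
  have key : ∀ (p q : CM) (i j : Fin 2), i ≠ j → p * cu i + q * cu j = 0 → p = 0 := by
    intro p q i j hij h
    apply MonoidAlgebra.coeff_injective
    apply Finsupp.ext
    intro z
    have hz := congrArg (fun f : CM => f.coeff (z * (FreeMonoid.of i, 1))) h
    have e1 : (p * cu i).coeff (z * (FreeMonoid.of i, 1)) = p.coeff z * 1 := by
      apply MonoidAlgebra.coeff_mul_single_eq_coeff_mul
      intro a _
      exact mul_left_inj _
    have e2 : (q * cu j).coeff (z * (FreeMonoid.of i, 1)) = 0 := by
      apply MonoidAlgebra.mul_single_apply_of_not_exists_mul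
      rintro ⟨d, hd⟩
      have hfst : z.1 * FreeMonoid.of i = d.1 * FreeMonoid.of j := congrArg Prod.fst hd
      have hl : (FreeMonoid.toList z.1) ++ [i] = (FreeMonoid.toList d.1) ++ [j] := hfst
      have : some i = some j := by
        rw [← List.getLast?_concat (l := FreeMonoid.toList z.1) (a := i),
          ← List.getLast?_concat (l := FreeMonoid.toList d.1) (a := j)]
        simp only [List.concat_eq_append, hl]
      exact hij (Option.some.injEq _ _ ▸ this)
    have hadd : (p * cu i + q * cu j).coeff (z * (FreeMonoid.of i, 1))
        = (p * cu i).coeff (z * (FreeMonoid.of i, 1)) + (q * cu j).coeff (z * (FreeMonoid.of i, 1)) :=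
      Finsupp.add_apply _ _ _
    rw [h] at hadd
    rw [e1, e2, add_zero, mul_one] at hadd
    exact hadd.symm
  have hp : p = 0 := key p q 0 1 (by decide) h
  have hq : q = 0 := by
    apply key q p 1 0 (by decide)
    rw [add_comm]; exact h
  exact ⟨hp, hq⟩

end SFAux
end Aux5

noncomputable section Aux6
namespace SFAux
open FreeLieAlgebra
variable (ρ : Fin 4 → L4)

section hyps3
variable
    (h1 : ρ 0 = ⁅of F3 (0 : Fin 4), of F3 (1 : Fin 4)⁆ + ⁅of F3 (0 : Fin 4), of F3 (3 : Fin 4)⁆)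
    (h2 : ρ 1 = ⁅of F3 (1 : Fin 4), of F3 (0 : Fin 4)⁆ + ⁅of F3 (1 : Fin 4), of F3 (2 : Fin 4)⁆
        + ⁅of F3 (1 : Fin 4), of F3 (3 : Fin 4)⁆)
    (h3 : ρ 2 = ⁅of F3 (2 : Fin 4), of F3 (3 : Fin 4)⁆)
    (h4 : ρ 3 = -⁅of F3 (3 : Fin 4), of F3 (0 : Fin 4)⁆ - ⁅of F3 (3 : Fin 4), of F3 (2 : Fin 4)⁆)

include h1 in
lemma D02 : Dmap ρ (ρ 0) 2 = 0 := by
  rw [h1, map_add, Dmap_lie, Dmap_lie, Dmap_of, Dmap_of, Dmap_of]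
  simp [act, Pi.single_apply, xU]

include h1 in
lemma D00 : Dmap ρ (ρ 0) 0 = -(xU ρ 1) - xU ρ 3 := by
  rw [h1, map_add, Dmap_lie, Dmap_lie, Dmap_of, Dmap_of, Dmap_of]
  simp only [Pi.add_apply, Pi.sub_apply, act, Pi.single_apply, xU]
  simp
  abel

include h2 in
lemma D12 : Dmap ρ (ρ 1) 2 = xU ρ 1 := by
  rw [h2, map_add, map_add, Dmap_lie, Dmap_lie, Dmap_lie, Dmap_of, Dmap_of, Dmap_of, Dmap_of]
  simp [act, Pi.single_apply, xU]

include h2 in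
lemma D10 : Dmap ρ (ρ 1) 0 = xU ρ 1 := by
  rw [h2, map_add, map_add, Dmap_lie, Dmap_lie, Dmap_lie, Dmap_of, Dmap_of, Dmap_of, Dmap_of]
  simp [act, Pi.single_apply, xU]

include h3 in
lemma D22 : Dmap ρ (ρ 2) 2 = -(xU ρ 3) := by
  rw [h3, Dmap_lie, Dmap_of, Dmap_of]
  simp [act, Pi.single_apply, xU]

include h3 in
lemma D20 : Dmap ρ (ρ 2) 0 = 0 := by
  rw [h3, Dmap_lie, Dmap_of, Dmap_of]
  simp [act, Pi.single_apply, xU]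

include h4 in
lemma D32 : Dmap ρ (ρ 3) 2 = -(xU ρ 3) := by
  rw [h4, map_sub, map_neg, Dmap_lie, Dmap_lie, Dmap_of, Dmap_of, Dmap_of]
  simp [act, Pi.single_apply, xU]

include h4 in
lemma D30 : Dmap ρ (ρ 3) 0 = -(xU ρ 3) := by
  rw [h4, map_sub, map_neg, Dmap_lie, Dmap_lie, Dmap_of, Dmap_of, Dmap_of]
  simp [act, Pi.single_apply, xU]

lemma ψ_gel (i : Fin 4) : ψ ρ (gel ρ i) = Dmap ρ (ρ i) := rfl

include h1 h2 h3 h4 in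
lemma indep_gel : LinearIndependent (UG ρ) (gel ρ) := by
  rw [Fintype.linearIndependent_iff]
  intro c hc
  have hD : ∑ i, c i • Dmap ρ (ρ i) = 0 := by
    have h := congrArg (ψ ρ) hc
    rw [map_sum, map_zero] at h
    simpa only [map_smul, ψ_gel] using h
  have hE2 : c 1 * xU ρ 1 + (-(c 2) - c 3) * xU ρ 3 = 0 := by
    have h := congrFun hD 2
    rw [Finset.sum_apply, Fin.sum_univ_four] at h
    simp only [Pi.smul_apply, smul_eq_mul, Pi.zero_apply] at h
    rw [D02 ρ h1, D12 ρ h2, D22 ρ h3, D32 ρ h4] at h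
    rw [sub_mul, neg_mul]
    rw [mul_zero] at h
    calc c 1 * xU ρ 1 + (-(c 2 * xU ρ 3) - c 3 * xU ρ 3)
        = 0 + c 1 * xU ρ 1 + c 2 * -(xU ρ 3) + c 3 * -(xU ρ 3) := by
          rw [mul_neg, mul_neg]; abel
      _ = 0 := h
  have hE0 : (-(c 0) + c 1) * xU ρ 1 + (-(c 0) - c 3) * xU ρ 3 = 0 := by
    have h := congrFun hD 0
    rw [Finset.sum_apply, Fin.sum_univ_four] at h
    simp only [Pi.smul_apply, smul_eq_mul, Pi.zero_apply] at h
    rw [D00 ρ h1, D10 ρ h2, D20 ρ h3, D30 ρ h4] at h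
    rw [add_mul, sub_mul, neg_mul, neg_mul]
    rw [mul_zero] at h
    calc -(c 0 * xU ρ 1) + c 1 * xU ρ 1 + (-(c 0 * xU ρ 3) - c 3 * xU ρ 3)
        = c 0 * (-(xU ρ 1) - xU ρ 3) + c 1 * xU ρ 1 + 0 + c 3 * -(xU ρ 3) := by
          rw [mul_sub, mul_neg, mul_neg]; abel
      _ = 0 := h
  -- push to the monoid algebra
  set θ := θA ρ h1 h2 h3 h4 with hθ
  have key2 : θ (-(c 2) - c 3) = 0 ∧ θ (c 1) = 0 := by
    have h := congrArg θ hE2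
    rw [map_add, map_mul, map_mul, map_zero, θA_xU, θA_xU] at h
    have htv1 : tv 1 = cu 1 := rfl
    have htv3 : tv 3 = cu 0 := rfl
    rw [htv1, htv3] at h
    apply cm_indep
    calc θ (-(c 2) - c 3) * cu 0 + θ (c 1) * cu 1
        = θ (c 1) * cu 1 + θ (-(c 2) - c 3) * cu 0 := by abel
      _ = 0 := h
  have key0 : θ (-(c 0) - c 3) = 0 ∧ θ (-(c 0) + c 1) = 0 := by
    have h := congrArg θ hE0
    rw [map_add, map_mul, map_mul, map_zero, θA_xU, θA_xU] at h
    have htv1 : tv 1 = cu 1 := rfl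
    have htv3 : tv 3 = cu 0 := rfl
    rw [htv1, htv3] at h
    apply cm_indep
    calc θ (-(c 0) - c 3) * cu 0 + θ (-(c 0) + c 1) * cu 1
        = θ (-(c 0) + c 1) * cu 1 + θ (-(c 0) - c 3) * cu 0 := by abel
      _ = 0 := h
  have hθc1 : θ (c 1) = 0 := key2.2
  have hθc0 : θ (c 0) = 0 := by
    have h := key0.2
    rw [map_add, map_neg, hθc1, add_zero, neg_eq_zero] at h
    exact h
  have hθc3 : θ (c 3) = 0 := by
    have h := key0.1
    rw [map_sub, map_neg, hθc0, neg_zero, zero_sub, neg_eq_zero] at h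
    exact h
  have hθc2 : θ (c 2) = 0 := by
    have h := key2.1
    rw [map_sub, map_neg, hθc3, sub_zero, neg_eq_zero] at h
    exact h
  intro i
  have hret : ∀ a : UG ρ, θ a = 0 → a = 0 := by
    intro a ha
    have := ηθ_id ρ h1 h2 h3 h4 a
    rw [hθ] at ha
    rw [ha, map_zero] at this
    exact this.symm
  fin_cases i
  · exact hret _ hθc0
  · exact hret _ hθc1
  · exact hret _ hθc2
  · exact hret _ hθc3

end hyps3
end SFAux
end Aux6


/-- In the free Lie algebra over `𝔽₃` on `ξ₁, ξ₂, ξ₃, ξ₄` (here `ξ_{i+1}` is the generator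
indexed by `i : Fin 4`), the sequence
`ρ₁ = [ξ₁,ξ₂] + [ξ₁,ξ₄]`, `ρ₂ = [ξ₂,ξ₁] + [ξ₂,ξ₃] + [ξ₂,ξ₄]`, `ρ₃ = [ξ₃,ξ₄]`,
`ρ₄ = −[ξ₄,ξ₁] − [ξ₄,ξ₃]` is strongly free. -/
theorem example_galois_strongly_free
    (ρ : Fin 4 → FreeLieAlgebra (ZMod 3) (Fin 4))
    (h1 : ρ 0 = ⁅FreeLieAlgebra.of (ZMod 3) (0 : Fin 4), FreeLieAlgebra.of (ZMod 3) (1 : Fin 4)⁆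
        + ⁅FreeLieAlgebra.of (ZMod 3) (0 : Fin 4), FreeLieAlgebra.of (ZMod 3) (3 : Fin 4)⁆)
    (h2 : ρ 1 = ⁅FreeLieAlgebra.of (ZMod 3) (1 : Fin 4), FreeLieAlgebra.of (ZMod 3) (0 : Fin 4)⁆
        + ⁅FreeLieAlgebra.of (ZMod 3) (1 : Fin 4), FreeLieAlgebra.of (ZMod 3) (2 : Fin 4)⁆
        + ⁅FreeLieAlgebra.of (ZMod 3) (1 : Fin 4), FreeLieAlgebra.of (ZMod 3) (3 : Fin 4)⁆)
    (h3 : ρ 2 = ⁅FreeLieAlgebra.of (ZMod 3) (2 : Fin 4), FreeLieAlgebra.of (ZMod 3) (3 : Fin 4)⁆)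
    (h4 : ρ 3 = -⁅FreeLieAlgebra.of (ZMod 3) (3 : Fin 4), FreeLieAlgebra.of (ZMod 3) (0 : Fin 4)⁆
        - ⁅FreeLieAlgebra.of (ZMod 3) (3 : Fin 4), FreeLieAlgebra.of (ZMod 3) (2 : Fin 4)⁆) :
    IsStronglyFree (ZMod 3) (FreeLieAlgebra (ZMod 3) (Fin 4)) ρ := by
  constructor
  · exact Submodule.isTorsionFree_iff_torsion_eq_bot.mp inferInstance
  · exact ⟨Module.Basis.mk (SFAux.indep_gel ρ h1 h2 h3 h4) (SFAux.span_gel_top ρ),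
      fun i => Module.Basis.mk_apply _ _ i⟩
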